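/- Let (A_i, B_i)_{i=1}^m be a (1/4)-balanced sequence of bipartitions of {1,...,M}, and let λ_1,...,λ_M be nonnegative reals with ∑_t λ_t = 1 and max_t λ_t ≤ 1 - 8ζ for some ζ > 0. Then there exists an index i such that min(∑_{t∈A_i} λ_t, ∑_{t∈B_i} λ_t) ≥ ζ. -/

import Mathlib

open Finset in
/-- If `(A i, (A i)ᶜ)`, `i = 1, ..., m`, is a `(1/4)`-balanced sequence of bipartitions
of `Fin M` and `λ_1, ..., λ_M` are nonnegative reals with `∑ λ_t = 1` and each
`λ_t ≤ 1 - 8ζ` for some `ζ > 0`, then some bipartition satisfies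
`min(∑_{t ∈ A_i} λ_t, ∑_{t ∈ B_i} λ_t) ≥ ζ`. -/
theorem stmt4 (m M : ℕ) (hm : 0 < m) (A : Fin m → Finset (Fin M))
    (hsize : ∀ i, (A i).card * 2 = M ∧ (A i)ᶜ.card * 2 = M)
    (hbal : ∀ t t' : Fin M, t ≠ t' →
      (((Finset.univ : Finset (Fin m)).filter
          (fun i => (t ∈ A i ↔ t' ∈ A i))).card : ℝ) ≤ (1 / 2 + 1 / 4) * m)
    (l : Fin M → ℝ) (ζ : ℝ) (hζ : 0 < ζ) (hnn : ∀ t, 0 ≤ l t)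
    (hsum : ∑ t, l t = 1) (hmax : ∀ t, l t ≤ 1 - 8 * ζ) :
    ∃ i, ζ ≤ min (∑ t ∈ A i, l t) (∑ t ∈ (A i)ᶜ, l t) := by
  classical
  -- M is positive
  have hM : M ≠ 0 := by
    rintro rfl
    simp at hsum
  have hζ8 : 8 * ζ ≤ 1 := by
    have t0 : Fin M := ⟨0, Nat.pos_of_ne_zero hM⟩
    have := (hnn t0).trans (hmax t0)
    linarith
  -- signs
  set ε : Fin M → Fin m → ℝ := fun t i => if t ∈ A i then 1 else -1 with hε
  have hε_sq : ∀ t i, ε t i * ε t i = 1 := by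
    intro t i; simp only [hε]; split <;> norm_num
  -- correlation bound for distinct indices
  have hcorr : ∀ t t' : Fin M, t ≠ t' → ∑ i, ε t i * ε t' i ≤ (m : ℝ) / 2 := by
    intro t t' htt
    have key : ∀ i, ε t i * ε t' i
        = (if (t ∈ A i ↔ t' ∈ A i) then (2 : ℝ) else 0) - 1 := by
      intro i
      simp only [hε]
      by_cases h1 : t ∈ A i <;> by_cases h2 : t' ∈ A i <;> simp [h1, h2] <;> norm_num
    calc ∑ i, ε t i * ε t' i
        = (∑ i, (if (t ∈ A i ↔ t' ∈ A i) then (2 : ℝ) else 0)) - m := by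
          rw [Finset.sum_congr rfl fun i _ => key i, Finset.sum_sub_distrib]
          simp
      _ = 2 * (((Finset.univ : Finset (Fin m)).filter
            (fun i => (t ∈ A i ↔ t' ∈ A i))).card : ℝ) - m := by
          rw [← Finset.sum_filter]
          simp [mul_comm]
      _ ≤ 2 * ((1 / 2 + 1 / 4) * m) - m := by
          have := hbal t t' htt
          linarith
      _ ≤ (m : ℝ) / 2 := by
          have : (0 : ℝ) ≤ m := Nat.cast_nonneg m
          linarith
  -- sum of squares of l
  have hsq : ∑ t, l t * l t ≤ 1 - 8 * ζ := by
    calc ∑ t, l t * l t ≤ ∑ t, (1 - 8 * ζ) * l t := by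
          apply Finset.sum_le_sum
          intro t _
          exact mul_le_mul_of_nonneg_right (hmax t) (hnn t)
      _ = 1 - 8 * ζ := by rw [← Finset.mul_sum, hsum, mul_one]
  -- the main second moment bound
  set D : Fin m → ℝ := fun i => ∑ t, ε t i * l t with hD
  have hmain : ∑ i, D i ^ 2 ≤ (1 - 4 * ζ) * m := by
    have expand : ∀ i, D i ^ 2
        = ∑ t, ∑ t', (l t * l t') * (ε t i * ε t' i) := by
      intro i
      rw [hD, sq, Finset.sum_mul_sum]
      apply Finset.sum_congr rfl; intro t _
      apply Finset.sum_congr rfl; intro t' _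
      ring
    have hmnn : (0 : ℝ) ≤ m := Nat.cast_nonneg m
    calc ∑ i, D i ^ 2
        = ∑ t, ∑ t', (l t * l t') * (∑ i, ε t i * ε t' i) := by
          rw [Finset.sum_congr rfl fun i _ => expand i, Finset.sum_comm]
          apply Finset.sum_congr rfl; intro t _
          rw [Finset.sum_comm]
          apply Finset.sum_congr rfl; intro t' _
          rw [Finset.mul_sum]
      _ ≤ ∑ t, ∑ t', ((l t * l t') * ((m : ℝ) / 2)
            + (if t = t' then (l t * l t') * ((m : ℝ) / 2) else 0)) := by
          apply Finset.sum_le_sum; intro t _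
          apply Finset.sum_le_sum; intro t' _
          by_cases h : t = t'
          · subst h
            have hs : ∑ i, ε t i * ε t i = (m : ℝ) := by
              rw [Finset.sum_congr rfl fun i _ => hε_sq t i]
              simp
            rw [hs, if_pos rfl]
            exact le_of_eq (by ring)
          · simp only [if_neg h, add_zero]
            exact mul_le_mul_of_nonneg_left (hcorr t t' h)
              (mul_nonneg (hnn t) (hnn t'))
      _ = (∑ t, ∑ t', (l t * l t') * ((m : ℝ) / 2))
            + ∑ t, (l t * l t) * ((m : ℝ) / 2) := by
          rw [← Finset.sum_add_distrib]
          apply Finset.sum_congr rfl; intro t _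
          rw [Finset.sum_add_distrib, Finset.sum_ite_eq]
          simp
      _ = (∑ t, l t) * (∑ t', l t') * ((m : ℝ) / 2)
            + (∑ t, l t * l t) * ((m : ℝ) / 2) := by
          rw [Finset.sum_mul_sum, Finset.sum_mul, Finset.sum_mul]
          apply congrArg₂ _ ?_ rfl
          apply Finset.sum_congr rfl; intro t _
          rw [Finset.sum_mul]
      _ ≤ 1 * 1 * ((m : ℝ) / 2) + (1 - 8 * ζ) * ((m : ℝ) / 2) := by
          rw [hsum]
          have := mul_le_mul_of_nonneg_right hsq (by linarith : (0:ℝ) ≤ (m:ℝ)/2)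
          linarith
      _ ≤ (1 - 4 * ζ) * m := by nlinarith
  -- pick a good index
  have hex : ∃ i, D i ^ 2 ≤ 1 - 4 * ζ := by
    by_contra h
    push_neg at h
    have : (1 - 4 * ζ) * m < ∑ i, D i ^ 2 := by
      calc (1 - 4 * ζ) * m = ∑ _i : Fin m, (1 - 4 * ζ) := by
            simp [mul_comm]
            ring
        _ < ∑ i, D i ^ 2 :=
            Finset.sum_lt_sum_of_nonempty ⟨⟨0, hm⟩, Finset.mem_univ _⟩
              (fun i _ => h i)
    linarith
  obtain ⟨i, hi⟩ := hex
  refine ⟨i, ?_⟩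
  have hST : (∑ t ∈ A i, l t) + (∑ t ∈ (A i)ᶜ, l t) = 1 := by
    rw [Finset.sum_add_sum_compl]; exact hsum
  have hDi : D i = (∑ t ∈ A i, l t) - (∑ t ∈ (A i)ᶜ, l t) := by
    simp only [hD]
    rw [← Finset.sum_add_sum_compl (A i) (fun t => ε t i * l t)]
    have h1 : ∑ t ∈ A i, ε t i * l t = ∑ t ∈ A i, l t :=
      Finset.sum_congr rfl fun t ht => by simp [hε, ht]
    have h2 : ∑ t ∈ (A i)ᶜ, ε t i * l t = -∑ t ∈ (A i)ᶜ, l t := by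
      rw [← Finset.sum_neg_distrib]
      exact Finset.sum_congr rfl fun t ht => by
        simp [hε, Finset.mem_compl.mp ht]
    rw [h1, h2]; ring
  rw [hDi] at hi
  set S := ∑ t ∈ A i, l t
  set T := ∑ t ∈ (A i)ᶜ, l t
  have h1 : ζ ≤ S := by nlinarith [sq_nonneg (S - T + (1 - 2 * ζ))]
  have h2 : ζ ≤ T := by nlinarith [sq_nonneg (S - T - (1 - 2 * ζ))]
  exact le_min h1 h2
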